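/- Let G be an abelian group and let H, K be subgroups of G with H ∩ K = {0}. Suppose there are retractions λ : G → H and ρ : G → K (homomorphisms with λ(G) ⊆ H, λ(h) = h for all h ∈ H, ρ(G) ⊆ K, ρ(k) = k for all k ∈ K) such that λ(K) = {0}. Then there exists a subgroup L of G which is isomorphic to H, satisfies L ∩ K = {0}, and such that the subgroup L + K (the internal direct sum of L and K) is a direct summand of G. -/
import Mathlib


/-- **Lemma 5.2 (splitting lemma).** Let `H, K ≤ G` with `H ∩ K = {0}`, and suppose there are
retractions `λ : G → H` and `ρ : G → K` with `λ(K) = {0}`. Then there is a subgroup `L ≤ G`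
isomorphic to `H`, with `L ∩ K = {0}`, such that `L + K` is a direct summand of `G`. -/
theorem splitting_lemma
    (G : Type*) [AddCommGroup G] (H K : AddSubgroup G) (hHK : H ⊓ K = ⊥)
    (lam ρ : G →+ G)
    (hlamH : ∀ x : G, lam x ∈ H) (hlamid : ∀ h ∈ H, lam h = h)
    (hρK : ∀ x : G, ρ x ∈ K) (hρid : ∀ k ∈ K, ρ k = k)
    (hlamK : ∀ k ∈ K, lam k = 0) :
    ∃ L : AddSubgroup G, Nonempty (L ≃+ H) ∧ L ⊓ K = ⊥ ∧
      ∃ σ : G →+ G, (∀ x : G, σ x ∈ L ⊔ K) ∧ ∀ a ∈ L ⊔ K, σ a = a := by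
  set f : G →+ G := AddMonoidHom.id G - ρ with hf
  have hfapp : ∀ x : G, f x = x - ρ x := fun x => rfl
  set L : AddSubgroup G := H.map f with hL
  have hmemL : ∀ x, x ∈ L ↔ ∃ h ∈ H, h - ρ h = x := by
    intro x
    simp [hL, AddSubgroup.mem_map, hfapp]
  -- lam fixes elements of L back to their H-part
  have hlamf : ∀ h ∈ H, lam (h - ρ h) = h := by
    intro h hh
    rw [map_sub, hlamid h hh, hlamK _ (hρK h), sub_zero]
  have hρf : ∀ h : G, ρ (h - ρ h) = 0 := by
    intro h
    rw [map_sub, hρid _ (hρK h), sub_self]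
  -- isomorphism L ≃+ H
  have e : L ≃+ H := by
    refine
      { toFun := fun x => ⟨lam x, hlamH x⟩
        invFun := fun h => ⟨h - ρ h, (hmemL _).2 ⟨h, h.2, rfl⟩⟩
        left_inv := ?_
        right_inv := ?_
        map_add' := by intro a b; ext; simp }
    · rintro ⟨x, hx⟩
      obtain ⟨h, hh, rfl⟩ := (hmemL x).1 hx
      ext
      simp [hlamf h hh]
    · rintro ⟨h, hh⟩
      ext
      simp [hlamf h hh]
  refine ⟨L, ⟨e⟩, ?_, ?_⟩
  · -- L ⊓ K = ⊥
    rw [eq_bot_iff]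
    rintro x ⟨hxL, hxK⟩
    obtain ⟨h, hh, rfl⟩ := (hmemL x).1 hxL
    have : h - ρ h = 0 := by
      have := hρid _ hxK
      rwa [hρf h, eq_comm] at this
    simp [this]
  · -- retraction σ
    refine ⟨f.comp lam + ρ, ?_, ?_⟩
    · intro x
      have h1 : f (lam x) ∈ L := ⟨lam x, hlamH x, rfl⟩
      exact AddSubgroup.add_mem_sup h1 (hρK x)
    · intro a ha
      obtain ⟨y, hy, z, hz, rfl⟩ := (AddSubgroup.mem_sup).1 ha
      obtain ⟨h, hh, rfl⟩ := (hmemL y).1 hy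
      have h1 : lam (h - ρ h + z) = h := by
        rw [map_add, hlamf h hh, hlamK z hz, add_zero]
      have h2 : ρ (h - ρ h + z) = z := by
        rw [map_add, hρf h, zero_add, hρid z hz]
      show f (lam (h - ρ h + z)) + ρ (h - ρ h + z) = _
      rw [h1, h2, hfapp]
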